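/- For any policy π and transition kernels P_s, P_t on a finite MDP with rewards bounded by R_max: J^π_{P_t} ≥ J^π_{P_s} − (2 R_max/(1−γ)) · ( D_TV(d^π_{P_s}, d^π_{P_t}) + E_{s∼d^π_{P_s}, a∼π(·|s)}[ D_TV(P_s(·|s,a), P_t(·|s,a)) ] ). -/

import Mathlib

open scoped BigOperators

section MDP

variable {S A : Type*} [Fintype S] [Fintype A] [DecidableEq S]

/-- One-step state distribution update under kernel `P` and policy `π`. -/
noncomputable def stepDist (P : S → A → S → ℝ) (π : S → A → ℝ) (ρ : S → ℝ) : S → ℝ :=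
  fun s => ∑ s' : S, ∑ a : A, ρ s' * π s' a * P s' a s

/-- Distribution of the state at time `t`. -/
noncomputable def stateDist (P : S → A → S → ℝ) (π : S → A → ℝ) (ρ₀ : S → ℝ) : ℕ → S → ℝ
  | 0 => ρ₀
  | t + 1 => stepDist P π (stateDist P π ρ₀ t)

/-- Discounted state visitation distribution `d^π_P`. -/
noncomputable def visitS (γ : ℝ) (P : S → A → S → ℝ) (π : S → A → ℝ) (ρ₀ : S → ℝ) : S → ℝ :=
  fun s => (1 - γ) * ∑' t : ℕ, γ ^ t * stateDist P π ρ₀ t s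

/-- Discounted state-action visitation distribution `μ^π_P`. -/
noncomputable def visitSA (γ : ℝ) (P : S → A → S → ℝ) (π : S → A → ℝ) (ρ₀ : S → ℝ) :
    S × A → ℝ :=
  fun x => (1 - γ) * ∑' t : ℕ, γ ^ t * stateDist P π ρ₀ t x.1 * π x.1 x.2

/-- Discounted transition (state-action-next-state) visitation distribution `ν^π_P`. -/
noncomputable def visitT (γ : ℝ) (P : S → A → S → ℝ) (π : S → A → ℝ) (ρ₀ : S → ℝ) :
    S × A × S → ℝ :=
  fun x => (1 - γ) * ∑' t : ℕ, γ ^ t * stateDist P π ρ₀ t x.1 * π x.1 x.2.1 * P x.1 x.2.1 x.2.2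

/-- Expected discounted return starting from initial distribution `ρ₀`. -/
noncomputable def ret (γ : ℝ) (r : S → A → S → ℝ) (P : S → A → S → ℝ) (π : S → A → ℝ)
    (ρ₀ : S → ℝ) : ℝ :=
  ∑' t : ℕ, γ ^ t *
    ∑ s : S, ∑ a : A, ∑ s' : S, stateDist P π ρ₀ t s * π s a * P s a s' * r s a s'

/-- Value function `V^π_P`. -/
noncomputable def valueFn (γ : ℝ) (r : S → A → S → ℝ) (P : S → A → S → ℝ) (π : S → A → ℝ) :
    S → ℝ :=
  fun s => ret γ r P π (fun s'' => if s'' = s then 1 else 0)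

/-- Expected discounted return `J^π_P = E_{ρ₀}[V^π_P]`. -/
noncomputable def expRet (γ : ℝ) (r : S → A → S → ℝ) (P : S → A → S → ℝ) (π : S → A → ℝ)
    (ρ₀ : S → ℝ) : ℝ :=
  ∑ s : S, ρ₀ s * valueFn γ r P π s

/-- Total variation distance `(1/2) ∑ |p - q|`. -/
noncomputable def tvDist {X : Type*} [Fintype X] (p q : X → ℝ) : ℝ :=
  (1 / 2) * ∑ x : X, |p x - q x|

/-- Kullback–Leibler divergence on a finite set. -/
noncomputable def klDiv' {X : Type*} [Fintype X] (p q : X → ℝ) : ℝ :=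
  ∑ x : X, p x * Real.log (p x / q x)

/-- Jensen–Shannon divergence on a finite set. -/
noncomputable def jsDiv {X : Type*} [Fintype X] (p q : X → ℝ) : ℝ :=
  (1 / 2) * klDiv' p (fun x => (p x + q x) / 2) +
    (1 / 2) * klDiv' q (fun x => (p x + q x) / 2)

/-- `π` is a stochastic policy. -/
def IsStochPol (π : S → A → ℝ) : Prop :=
  ∀ s, (∀ a, 0 ≤ π s a) ∧ ∑ a : A, π s a = 1

/-- `P` is a stochastic transition kernel. -/
def IsStochKer (P : S → A → S → ℝ) : Prop :=
  ∀ s a, (∀ s', 0 ≤ P s a s') ∧ ∑ s' : S, P s a s' = 1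

/-- `p` is a probability mass function. -/
def IsProb {X : Type*} [Fintype X] (p : X → ℝ) : Prop :=
  (∀ x, 0 ≤ p x) ∧ ∑ x : X, p x = 1

end MDP

set_option linter.unusedSectionVars false
set_option linter.unusedVariables false

section Helpers

variable {S A : Type*} [Fintype S] [Fintype A] [DecidableEq S]

private lemma summable_geom_bdd {γ : ℝ} (hγ0 : 0 ≤ γ) (hγ1 : γ < 1) {f : ℕ → ℝ} {C : ℝ}
    (h : ∀ t, |f t| ≤ C) : Summable (fun t => γ ^ t * f t) := by
  apply Summable.of_norm_bounded (g := fun t => γ ^ t * C)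
    ((summable_geometric_of_lt_one hγ0 hγ1).mul_right C)
  intro t
  rw [Real.norm_eq_abs, abs_mul, abs_pow, abs_of_nonneg hγ0]
  exact mul_le_mul_of_nonneg_left (h t) (pow_nonneg hγ0 t)

private lemma IsProb.le_one' {X : Type*} [Fintype X] {p : X → ℝ} (hp : IsProb p) (x : X) :
    p x ≤ 1 := by
  rw [← hp.2]
  exact Finset.single_le_sum (fun i _ => hp.1 i) (Finset.mem_univ x)

private lemma stateDist_prob {P : S → A → S → ℝ} {π : S → A → ℝ} {ρ₀ : S → ℝ}
    (hπ : IsStochPol π) (hP : IsStochKer P) (hρ : IsProb ρ₀) (t : ℕ) :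
    IsProb (stateDist P π ρ₀ t) := by
  induction t with
  | zero => exact hρ
  | succ t ih =>
    constructor
    · intro s
      apply Finset.sum_nonneg; intro s' _
      apply Finset.sum_nonneg; intro a _
      exact mul_nonneg (mul_nonneg (ih.1 s') ((hπ s').1 a)) ((hP s' a).1 s)
    · show ∑ s : S, ∑ s' : S, ∑ a : A, stateDist P π ρ₀ t s' * π s' a * P s' a s = 1
      rw [Finset.sum_comm]
      calc ∑ s' : S, ∑ s : S, ∑ a : A, stateDist P π ρ₀ t s' * π s' a * P s' a s
          = ∑ s' : S, ∑ a : A, ∑ s : S, stateDist P π ρ₀ t s' * π s' a * P s' a s :=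
            Finset.sum_congr rfl fun s' _ => Finset.sum_comm
        _ = ∑ s' : S, ∑ a : A, stateDist P π ρ₀ t s' * π s' a := by
            refine Finset.sum_congr rfl fun s' _ => Finset.sum_congr rfl fun a _ => ?_
            rw [← Finset.mul_sum, (hP s' a).2, mul_one]
        _ = ∑ s' : S, stateDist P π ρ₀ t s' := by
            refine Finset.sum_congr rfl fun s' _ => ?_
            rw [← Finset.mul_sum, (hπ s').2, mul_one]
        _ = 1 := ih.2

private lemma term_bound {P : S → A → S → ℝ} {π : S → A → ℝ} {r : S → A → S → ℝ}
    {Rmax : ℝ} {ρ : S → ℝ}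
    (hπ : IsStochPol π) (hP : IsStochKer P) (hρ : IsProb ρ)
    (hr : ∀ s a s', |r s a s'| ≤ Rmax) (s : S) (a : A) (s' : S) :
    |ρ s * π s a * P s a s' * r s a s'| ≤ Rmax := by
  have h1 : 0 ≤ ρ s := hρ.1 s
  have h2 : 0 ≤ π s a := (hπ s).1 a
  have h3 : 0 ≤ P s a s' := (hP s a).1 s'
  have h4 : ρ s ≤ 1 := hρ.le_one' s
  have h5 : π s a ≤ 1 := by
    rw [← (hπ s).2]; exact Finset.single_le_sum (fun i _ => (hπ s).1 i) (Finset.mem_univ a)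
  have h6 : P s a s' ≤ 1 := by
    rw [← (hP s a).2]; exact Finset.single_le_sum (fun i _ => (hP s a).1 i) (Finset.mem_univ s')
  have h7 : |r s a s'| ≤ Rmax := hr s a s'
  have h8 : 0 ≤ |r s a s'| := abs_nonneg _
  rw [abs_mul, abs_of_nonneg (mul_nonneg (mul_nonneg h1 h2) h3)]
  have h9 : ρ s * π s a * P s a s' ≤ 1 :=
    mul_le_one₀ (mul_le_one₀ h4 h2 h5) h3 h6
  calc ρ s * π s a * P s a s' * |r s a s'| ≤ 1 * |r s a s'| :=
        mul_le_mul_of_nonneg_right h9 h8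
    _ = |r s a s'| := one_mul _
    _ ≤ Rmax := h7

private lemma sum_ker_one {P : S → A → S → ℝ} {π : S → A → ℝ} {ρ : S → ℝ}
    (hπ : IsStochPol π) (hP : IsStochKer P) (hρ : IsProb ρ) :
    ∑ s : S, ∑ a : A, ∑ s' : S, ρ s * π s a * P s a s' = 1 := by
  have h1 : ∀ s a, ∑ s' : S, ρ s * π s a * P s a s' = ρ s * π s a := fun s a => by
    rw [← Finset.mul_sum, (hP s a).2, mul_one]
  have h2 : ∀ s, ∑ a : A, ρ s * π s a = ρ s := fun s => by
    rw [← Finset.mul_sum, (hπ s).2, mul_one]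
  simp only [h1, h2, hρ.2]

private lemma absF_le {P : S → A → S → ℝ} {π : S → A → ℝ} {r : S → A → S → ℝ}
    {Rmax : ℝ} {ρ : S → ℝ}
    (hπ : IsStochPol π) (hP : IsStochKer P) (hρ : IsProb ρ)
    (hr : ∀ s a s', |r s a s'| ≤ Rmax) :
    |∑ s : S, ∑ a : A, ∑ s' : S, ρ s * π s a * P s a s' * r s a s'| ≤ Rmax := by
  calc |∑ s : S, ∑ a : A, ∑ s' : S, ρ s * π s a * P s a s' * r s a s'|
      ≤ ∑ s : S, ∑ a : A, ∑ s' : S, |ρ s * π s a * P s a s' * r s a s'| := by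
        refine (Finset.abs_sum_le_sum_abs _ _).trans (Finset.sum_le_sum fun s _ => ?_)
        refine (Finset.abs_sum_le_sum_abs _ _).trans (Finset.sum_le_sum fun a _ => ?_)
        exact Finset.abs_sum_le_sum_abs _ _
    _ ≤ ∑ s : S, ∑ a : A, ∑ s' : S, ρ s * π s a * P s a s' * Rmax := by
        refine Finset.sum_le_sum fun s _ => Finset.sum_le_sum fun a _ =>
          Finset.sum_le_sum fun s' _ => ?_
        rw [abs_mul, abs_of_nonneg
          (mul_nonneg (mul_nonneg (hρ.1 s) ((hπ s).1 a)) ((hP s a).1 s'))]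
        exact mul_le_mul_of_nonneg_left (hr s a s')
          (mul_nonneg (mul_nonneg (hρ.1 s) ((hπ s).1 a)) ((hP s a).1 s'))
    _ = Rmax := by
        have : ∑ s : S, ∑ a : A, ∑ s' : S, ρ s * π s a * P s a s' * Rmax
            = (∑ s : S, ∑ a : A, ∑ s' : S, ρ s * π s a * P s a s') * Rmax := by
          simp only [Finset.sum_mul]
        rw [this, sum_ker_one hπ hP hρ, one_mul]

private lemma stateDist_linear (P : S → A → S → ℝ) (π : S → A → ℝ) (ρ₀ : S → ℝ) :
    ∀ (t : ℕ) (s'' : S), stateDist P π ρ₀ t s'' =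
      ∑ s : S, ρ₀ s * stateDist P π (fun x => if x = s then 1 else 0) t s'' := by
  intro t
  induction t with
  | zero =>
    intro s''
    show ρ₀ s'' = ∑ s : S, ρ₀ s * (if s'' = s then 1 else 0)
    simp
  | succ t ih =>
    intro s''
    show stepDist P π (stateDist P π ρ₀ t) s'' = _
    unfold stepDist
    calc ∑ s' : S, ∑ a : A, stateDist P π ρ₀ t s' * π s' a * P s' a s''
        = ∑ s' : S, ∑ a : A, (∑ s : S, ρ₀ s *
            stateDist P π (fun x => if x = s then 1 else 0) t s') * π s' a * P s' a s'' := by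
          refine Finset.sum_congr rfl fun s' _ => Finset.sum_congr rfl fun a _ => ?_
          rw [← ih s']
      _ = ∑ s' : S, ∑ a : A, ∑ s : S, ρ₀ s *
            (stateDist P π (fun x => if x = s then 1 else 0) t s' * π s' a * P s' a s'') := by
          refine Finset.sum_congr rfl fun s' _ => Finset.sum_congr rfl fun a _ => ?_
          rw [Finset.sum_mul, Finset.sum_mul]
          exact Finset.sum_congr rfl fun s _ => by ring
      _ = ∑ s' : S, ∑ s : S, ∑ a : A, ρ₀ s *
            (stateDist P π (fun x => if x = s then 1 else 0) t s' * π s' a * P s' a s'') :=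
          Finset.sum_congr rfl fun s' _ => Finset.sum_comm
      _ = ∑ s : S, ∑ s' : S, ∑ a : A, ρ₀ s *
            (stateDist P π (fun x => if x = s then 1 else 0) t s' * π s' a * P s' a s'') :=
          Finset.sum_comm
      _ = ∑ s : S, ρ₀ s * stepDist P π (stateDist P π (fun x => if x = s then 1 else 0) t) s'' := by
          refine Finset.sum_congr rfl fun s _ => ?_
          unfold stepDist
          rw [Finset.mul_sum]
          exact Finset.sum_congr rfl fun s' _ => by rw [Finset.mul_sum]

end Helpers

section Helpers2

variable {S A : Type*} [Fintype S] [Fintype A] [DecidableEq S]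

private lemma sum_comm4 {X Y Z W : Type*} [Fintype X] [Fintype Y] [Fintype Z] [Fintype W]
    (f : X → Y → Z → W → ℝ) :
    ∑ x : X, ∑ y : Y, ∑ z : Z, ∑ w : W, f x y z w
      = ∑ y : Y, ∑ z : Z, ∑ w : W, ∑ x : X, f x y z w := by
  calc ∑ x : X, ∑ y : Y, ∑ z : Z, ∑ w : W, f x y z w
      = ∑ y : Y, ∑ x : X, ∑ z : Z, ∑ w : W, f x y z w := Finset.sum_comm
    _ = ∑ y : Y, ∑ z : Z, ∑ x : X, ∑ w : W, f x y z w :=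
        Finset.sum_congr rfl fun y _ => Finset.sum_comm
    _ = ∑ y : Y, ∑ z : Z, ∑ w : W, ∑ x : X, f x y z w :=
        Finset.sum_congr rfl fun y _ => Finset.sum_congr rfl fun z _ => Finset.sum_comm

private lemma abs_sum_le_card {X : Type*} [Fintype X] {f : X → ℝ} {C : ℝ} (h : ∀ x, |f x| ≤ C) :
    |∑ x : X, f x| ≤ (Fintype.card X : ℝ) * C := by
  calc |∑ x : X, f x| ≤ ∑ x : X, |f x| := Finset.abs_sum_le_sum_abs _ _
    _ ≤ ∑ _x : X, C := Finset.sum_le_sum fun x _ => h x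
    _ = (Fintype.card X : ℝ) * C := by
        simp [Finset.sum_const, nsmul_eq_mul, Finset.card_univ]

private lemma sum_tsum_swap {γ : ℝ} (hγ0 : 0 ≤ γ) (hγ1 : γ < 1)
    (g : S → ℕ → ℝ) (C : ℝ) (hg : ∀ s t, |g s t| ≤ C) (c : S → ℝ) :
    ∑ s : S, c s * ∑' t : ℕ, γ ^ t * g s t = ∑' t : ℕ, γ ^ t * ∑ s : S, c s * g s t := by
  calc ∑ s : S, c s * ∑' t : ℕ, γ ^ t * g s t
      = ∑ s : S, ∑' t : ℕ, c s * (γ ^ t * g s t) :=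
        Finset.sum_congr rfl fun s _ => (tsum_mul_left).symm
    _ = ∑' t : ℕ, ∑ s : S, c s * (γ ^ t * g s t) :=
        (Summable.tsum_finsetSum fun s _ => (summable_geom_bdd hγ0 hγ1 (hg s)).mul_left (c s)).symm
    _ = ∑' t : ℕ, γ ^ t * ∑ s : S, c s * g s t := by
        refine tsum_congr fun t => ?_
        rw [Finset.mul_sum]
        exact Finset.sum_congr rfl fun s _ => by ring

private lemma tsum_swap_general {X : Type*} [Fintype X] {γ : ℝ} (hγ0 : 0 ≤ γ) (hγ1 : γ < 1)
    (g : ℕ → X → ℝ) (C : X → ℝ) (hg : ∀ x t, |g t x| ≤ C x) :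
    ∑' t : ℕ, γ ^ t * ∑ x : X, g t x = ∑ x : X, ∑' t : ℕ, γ ^ t * g t x := by
  calc ∑' t : ℕ, γ ^ t * ∑ x : X, g t x
      = ∑' t : ℕ, ∑ x : X, γ ^ t * g t x := tsum_congr fun t => Finset.mul_sum _ _ _
    _ = ∑ x : X, ∑' t : ℕ, γ ^ t * g t x :=
        Summable.tsum_finsetSum fun x _ => summable_geom_bdd hγ0 hγ1 (hg x)

private lemma F_linear (P : S → A → S → ℝ) (π : S → A → ℝ) (ρ₀ : S → ℝ)
    (r : S → A → S → ℝ) (t : ℕ) :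
    ∑ s : S, ρ₀ s * ∑ s0 : S, ∑ a : A, ∑ s' : S,
        stateDist P π (fun s'' => if s'' = s then 1 else 0) t s0 * π s0 a * P s0 a s' * r s0 a s'
      = ∑ s0 : S, ∑ a : A, ∑ s' : S,
          stateDist P π ρ₀ t s0 * π s0 a * P s0 a s' * r s0 a s' := by
  calc ∑ s : S, ρ₀ s * ∑ s0 : S, ∑ a : A, ∑ s' : S,
        stateDist P π (fun s'' => if s'' = s then 1 else 0) t s0 * π s0 a * P s0 a s' * r s0 a s'
      = ∑ s : S, ∑ s0 : S, ∑ a : A, ∑ s' : S, ρ₀ s *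
          (stateDist P π (fun s'' => if s'' = s then 1 else 0) t s0 * π s0 a * P s0 a s' * r s0 a s') := by
        refine Finset.sum_congr rfl fun s _ => ?_
        simp only [Finset.mul_sum]
    _ = ∑ s0 : S, ∑ a : A, ∑ s' : S, ∑ s : S, ρ₀ s *
          (stateDist P π (fun s'' => if s'' = s then 1 else 0) t s0 * π s0 a * P s0 a s' * r s0 a s') :=
        sum_comm4 _
    _ = ∑ s0 : S, ∑ a : A, ∑ s' : S,
          stateDist P π ρ₀ t s0 * π s0 a * P s0 a s' * r s0 a s' := by
        refine Finset.sum_congr rfl fun s0 _ => Finset.sum_congr rfl fun a _ =>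
          Finset.sum_congr rfl fun s' _ => ?_
        rw [stateDist_linear P π ρ₀ t s0, Finset.sum_mul, Finset.sum_mul, Finset.sum_mul]
        exact Finset.sum_congr rfl fun s _ => by ring

private lemma expRet_eq_ret {γ : ℝ} (hγ0 : 0 ≤ γ) (hγ1 : γ < 1)
    (r P : S → A → S → ℝ) (π : S → A → ℝ) (ρ₀ : S → ℝ) (Rmax : ℝ)
    (hπ : IsStochPol π) (hP : IsStochKer P) (hρ : IsProb ρ₀)
    (hr : ∀ s a s', |r s a s'| ≤ Rmax) :
    expRet γ r P π ρ₀ = ret γ r P π ρ₀ := by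
  have hδ : ∀ s : S, IsProb (fun x : S => if x = s then (1:ℝ) else 0) := fun s =>
    ⟨fun x => by dsimp only; split <;> norm_num, by simp⟩
  unfold expRet valueFn ret
  rw [sum_tsum_swap hγ0 hγ1
    (fun s t => ∑ s0 : S, ∑ a : A, ∑ s' : S,
      stateDist P π (fun s'' => if s'' = s then 1 else 0) t s0 * π s0 a * P s0 a s' * r s0 a s')
    Rmax (fun s t => absF_le hπ hP (stateDist_prob hπ hP (hδ s) t) hr) ρ₀]
  exact tsum_congr fun t => by rw [F_linear]

private lemma ret_eq {γ : ℝ} (hγ0 : 0 ≤ γ) (hγ1 : γ < 1)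
    (r P : S → A → S → ℝ) (π : S → A → ℝ) (ρ₀ : S → ℝ) (Rmax : ℝ)
    (hπ : IsStochPol π) (hP : IsStochKer P) (hρ : IsProb ρ₀)
    (hr : ∀ s a s', |r s a s'| ≤ Rmax) :
    (1 - γ) * ret γ r P π ρ₀
      = ∑ s : S, ∑ a : A, ∑ s' : S, visitS γ P π ρ₀ s * π s a * P s a s' * r s a s' := by
  have hb0 : ∀ (t : ℕ) s a s', |stateDist P π ρ₀ t s * π s a * P s a s' * r s a s'| ≤ Rmax :=
    fun t s a s' => term_bound hπ hP (stateDist_prob hπ hP hρ t) hr s a s'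
  have key : ret γ r P π ρ₀ = ∑ s : S, ∑ a : A, ∑ s' : S,
      (∑' t : ℕ, γ ^ t * stateDist P π ρ₀ t s) * (π s a * P s a s' * r s a s') := by
    unfold ret
    calc (∑' t : ℕ, γ ^ t * ∑ s : S, ∑ a : A, ∑ s' : S,
            stateDist P π ρ₀ t s * π s a * P s a s' * r s a s')
        = ∑ s : S, ∑' t : ℕ, γ ^ t * ∑ a : A, ∑ s' : S,
            stateDist P π ρ₀ t s * π s a * P s a s' * r s a s' :=
          tsum_swap_general hγ0 hγ1 _ _
            (fun s t => abs_sum_le_card fun a => abs_sum_le_card fun s' => hb0 t s a s')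
      _ = ∑ s : S, ∑ a : A, ∑' t : ℕ, γ ^ t * ∑ s' : S,
            stateDist P π ρ₀ t s * π s a * P s a s' * r s a s' :=
          Finset.sum_congr rfl fun s _ => tsum_swap_general hγ0 hγ1 _ _
            (fun a t => abs_sum_le_card fun s' => hb0 t s a s')
      _ = ∑ s : S, ∑ a : A, ∑ s' : S, ∑' t : ℕ,
            γ ^ t * (stateDist P π ρ₀ t s * π s a * P s a s' * r s a s') :=
          Finset.sum_congr rfl fun s _ => Finset.sum_congr rfl fun a _ =>
            tsum_swap_general hγ0 hγ1 _ _ (fun s' t => hb0 t s a s')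
      _ = ∑ s : S, ∑ a : A, ∑ s' : S,
            (∑' t : ℕ, γ ^ t * stateDist P π ρ₀ t s) * (π s a * P s a s' * r s a s') := by
          refine Finset.sum_congr rfl fun s _ => Finset.sum_congr rfl fun a _ =>
            Finset.sum_congr rfl fun s' _ => ?_
          rw [← tsum_mul_right]
          exact tsum_congr fun t => by ring
  rw [key]
  simp only [visitS]
  rw [Finset.mul_sum]
  refine Finset.sum_congr rfl fun s _ => ?_
  rw [Finset.mul_sum]
  refine Finset.sum_congr rfl fun a _ => ?_
  rw [Finset.mul_sum]
  exact Finset.sum_congr rfl fun s' _ => by ring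

private lemma visitS_nonneg {γ : ℝ} (hγ0 : 0 ≤ γ) (hγ1 : γ < 1)
    {P : S → A → S → ℝ} {π : S → A → ℝ} {ρ₀ : S → ℝ}
    (hπ : IsStochPol π) (hP : IsStochKer P) (hρ : IsProb ρ₀) (s : S) :
    0 ≤ visitS γ P π ρ₀ s :=
  mul_nonneg (by linarith) (tsum_nonneg fun t =>
    mul_nonneg (pow_nonneg hγ0 t) ((stateDist_prob hπ hP hρ t).1 s))

end Helpers2

theorem stmt6 {S A : Type*} [Fintype S] [Fintype A] [DecidableEq S]
    (γ : ℝ) (hγ0 : 0 ≤ γ) (hγ1 : γ < 1)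
    (r Ps Pt : S → A → S → ℝ) (π : S → A → ℝ) (ρ₀ : S → ℝ)
    (hπ : IsStochPol π) (hPs : IsStochKer Ps) (hPt : IsStochKer Pt) (hρ : IsProb ρ₀)
    (Rmax : ℝ) (hr : ∀ s a s', |r s a s'| ≤ Rmax) :
    expRet γ r Pt π ρ₀ ≥
      expRet γ r Ps π ρ₀ -
        (2 * Rmax / (1 - γ)) *
          (tvDist (visitS γ Ps π ρ₀) (visitS γ Pt π ρ₀) +
            ∑ s : S, ∑ a : A, visitS γ Ps π ρ₀ s * π s a *
              tvDist (fun s' => Ps s a s') (fun s' => Pt s a s')) := by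
  have hS : Nonempty S := by
    by_contra h
    rw [not_nonempty_iff] at h
    have h2 := hρ.2
    simp [Finset.univ_eq_empty] at h2
  obtain ⟨s₀⟩ := hS
  have hA : Nonempty A := by
    by_contra h
    rw [not_nonempty_iff] at h
    have h2 := (hπ s₀).2
    simp [Finset.univ_eq_empty] at h2
  obtain ⟨a₀⟩ := hA
  have hR0 : 0 ≤ Rmax := le_trans (abs_nonneg _) (hr s₀ a₀ s₀)
  have h1γ : 0 < 1 - γ := by linarith
  set Ds := visitS γ Ps π ρ₀ with hDsdef
  set Dt := visitS γ Pt π ρ₀ with hDtdef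
  have hDs0 : ∀ s, 0 ≤ Ds s := visitS_nonneg hγ0 hγ1 hπ hPs hρ
  have hDt0 : ∀ s, 0 ≤ Dt s := visitS_nonneg hγ0 hγ1 hπ hPt hρ
  set X := tvDist Ds Dt + ∑ s : S, ∑ a : A, Ds s * π s a *
      tvDist (fun s' => Ps s a s') (fun s' => Pt s a s') with hXdef
  have hs : (1 - γ) * expRet γ r Ps π ρ₀
      = ∑ s : S, ∑ a : A, ∑ s' : S, Ds s * π s a * Ps s a s' * r s a s' := by
    rw [expRet_eq_ret hγ0 hγ1 r Ps π ρ₀ Rmax hπ hPs hρ hr]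
    exact ret_eq hγ0 hγ1 r Ps π ρ₀ Rmax hπ hPs hρ hr
  have ht : (1 - γ) * expRet γ r Pt π ρ₀
      = ∑ s : S, ∑ a : A, ∑ s' : S, Dt s * π s a * Pt s a s' * r s a s' := by
    rw [expRet_eq_ret hγ0 hγ1 r Pt π ρ₀ Rmax hπ hPt hρ hr]
    exact ret_eq hγ0 hγ1 r Pt π ρ₀ Rmax hπ hPt hρ hr
  -- sum of bound terms equals 2 * X
  have h1 : ∑ s : S, ∑ a : A, ∑ s' : S, Ds s * π s a * |Ps s a s' - Pt s a s'|
      = 2 * ∑ s : S, ∑ a : A, Ds s * π s a *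
          tvDist (fun s' => Ps s a s') (fun s' => Pt s a s') := by
    rw [Finset.mul_sum]
    refine Finset.sum_congr rfl fun s _ => ?_
    rw [Finset.mul_sum]
    refine Finset.sum_congr rfl fun a _ => ?_
    have e : ∑ s' : S, Ds s * π s a * |Ps s a s' - Pt s a s'|
        = Ds s * π s a * ∑ s' : S, |Ps s a s' - Pt s a s'| := (Finset.mul_sum _ _ _).symm
    rw [e]
    simp only [tvDist]
    ring
  have h2 : ∑ s : S, ∑ a : A, ∑ s' : S, |Ds s - Dt s| * π s a * Pt s a s'
      = 2 * tvDist Ds Dt := by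
    have hterm : ∀ s : S, ∑ a : A, ∑ s' : S, |Ds s - Dt s| * π s a * Pt s a s'
        = |Ds s - Dt s| := by
      intro s
      have h21 : ∀ a : A, ∑ s' : S, |Ds s - Dt s| * π s a * Pt s a s'
          = |Ds s - Dt s| * π s a := fun a => by
        rw [← Finset.mul_sum, (hPt s a).2, mul_one]
      simp only [h21]
      rw [← Finset.mul_sum, (hπ s).2, mul_one]
    simp only [hterm, tvDist]
    ring
  have hsum_bound : ∑ s : S, ∑ a : A, ∑ s' : S,
        (Ds s * π s a * |Ps s a s' - Pt s a s'| + |Ds s - Dt s| * π s a * Pt s a s')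
      = 2 * X := by
    simp only [Finset.sum_add_distrib]
    rw [h1, h2, hXdef]
    ring
  -- pointwise bound
  have hterm_ge : ∀ s a s',
      Dt s * π s a * Pt s a s' * r s a s' - Ds s * π s a * Ps s a s' * r s a s'
        ≥ -Rmax * (Ds s * π s a * |Ps s a s' - Pt s a s'|
            + |Ds s - Dt s| * π s a * Pt s a s') := by
    intro s a s'
    have habs : |Dt s * π s a * Pt s a s' - Ds s * π s a * Ps s a s'|
        ≤ Ds s * π s a * |Ps s a s' - Pt s a s'| + |Ds s - Dt s| * π s a * Pt s a s' := by
      have e : Dt s * π s a * Pt s a s' - Ds s * π s a * Ps s a s'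
          = Ds s * π s a * (Pt s a s' - Ps s a s') + (Dt s - Ds s) * π s a * Pt s a s' := by
        ring
      rw [e]
      refine (abs_add_le _ _).trans (add_le_add ?_ ?_)
      · refine le_of_eq ?_
        rw [abs_mul, abs_of_nonneg (mul_nonneg (hDs0 s) ((hπ s).1 a)), abs_sub_comm]
      · refine le_of_eq ?_
        rw [abs_mul, abs_mul, abs_of_nonneg ((hπ s).1 a),
          abs_of_nonneg ((hPt s a).1 s'), abs_sub_comm]
    have hB0 : 0 ≤ Ds s * π s a * |Ps s a s' - Pt s a s'|
        + |Ds s - Dt s| * π s a * Pt s a s' := by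
      have := mul_nonneg (mul_nonneg (hDs0 s) ((hπ s).1 a)) (abs_nonneg (Ps s a s' - Pt s a s'))
      have := mul_nonneg (mul_nonneg (abs_nonneg (Ds s - Dt s)) ((hπ s).1 a)) ((hPt s a).1 s')
      linarith
    have hzr : |(Dt s * π s a * Pt s a s' - Ds s * π s a * Ps s a s') * r s a s'|
        ≤ (Ds s * π s a * |Ps s a s' - Pt s a s'| + |Ds s - Dt s| * π s a * Pt s a s') * Rmax := by
      rw [abs_mul]
      exact mul_le_mul habs (hr s a s') (abs_nonneg _) hB0
    have hneg := neg_abs_le ((Dt s * π s a * Pt s a s' - Ds s * π s a * Ps s a s') * r s a s')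
    have hexp : (Dt s * π s a * Pt s a s' - Ds s * π s a * Ps s a s') * r s a s'
        = Dt s * π s a * Pt s a s' * r s a s' - Ds s * π s a * Ps s a s' * r s a s' := by ring
    nlinarith [hzr, hneg, hexp]
  have main : (1 - γ) * expRet γ r Pt π ρ₀ - (1 - γ) * expRet γ r Ps π ρ₀
      ≥ -Rmax * (2 * X) := by
    rw [ht, hs, ← Finset.sum_sub_distrib]
    simp only [← Finset.sum_sub_distrib]
    calc ∑ s : S, ∑ a : A, ∑ s' : S,
          (Dt s * π s a * Pt s a s' * r s a s' - Ds s * π s a * Ps s a s' * r s a s')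
        ≥ ∑ s : S, ∑ a : A, ∑ s' : S,
            -Rmax * (Ds s * π s a * |Ps s a s' - Pt s a s'|
              + |Ds s - Dt s| * π s a * Pt s a s') :=
          Finset.sum_le_sum fun s _ => Finset.sum_le_sum fun a _ =>
            Finset.sum_le_sum fun s' _ => hterm_ge s a s'
      _ = -Rmax * ∑ s : S, ∑ a : A, ∑ s' : S,
            (Ds s * π s a * |Ps s a s' - Pt s a s'|
              + |Ds s - Dt s| * π s a * Pt s a s') := by
          simp only [← Finset.mul_sum]
      _ = -Rmax * (2 * X) := by rw [hsum_bound]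
  have hc : 2 * Rmax / (1 - γ) * (1 - γ) = 2 * Rmax := div_mul_cancel₀ _ (ne_of_gt h1γ)
  rw [ge_iff_le, sub_le_iff_le_add]
  have h3 : (1 - γ) * (2 * Rmax / (1 - γ) * X) = 2 * Rmax * X := by
    rw [← mul_assoc, mul_comm (1 - γ) (2 * Rmax / (1 - γ)), hc]
  have h2' : (1 - γ) * expRet γ r Ps π ρ₀
      ≤ (1 - γ) * (expRet γ r Pt π ρ₀ + 2 * Rmax / (1 - γ) * X) := by
    rw [mul_add, h3]
    linarith [main]
  exact le_of_mul_le_mul_left h2' h1γ
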